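/- Let N ≥ 3 be an integer, B > 0 and c > 0. Suppose R : (0,1)×(0,∞) → ℝ is measurable with |R(ξ,t)| ≤ B for all (ξ,t), such that for each t the function ξ ↦ ξ^{2/N−1}(2−ξ)|R(ξ,t)| is integrable on (0,1), and set Ψ(t) := ∫₀¹ ξ^{2/N−1}(2−ξ)|R(ξ,t)| dξ. Assume Ψ is nonincreasing on (0,∞) and Ψ(t) ≤ Ψ(t₀) − c ∫_{t₀}^{t} ∫₀¹ |R(ξ,τ)| dξ dτ for all 0 < t₀ ≤ t < ∞. Then Ψ(t) → 0 as t → ∞. -/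

import Mathlib

open Set MeasureTheory

/-- **Decay of the weighted L¹ functional.** Let `N ≥ 3`, `B, c > 0`, and let
`R : (0,1)×(0,∞) → ℝ` be measurable with `|R| ≤ B`, such that
`Ψ(t) = ∫₀¹ ξ^{2/N−1}(2−ξ)|R(ξ,t)| dξ` is well defined, nonincreasing on `(0,∞)`, and
`Ψ(t) ≤ Ψ(t₀) − c ∫_{t₀}^t ∫₀¹ |R| dξ dτ` for all `0 < t₀ ≤ t`. Then `Ψ(t) → 0` as
`t → ∞`. -/
theorem weighted_L1_decay
    (N : ℕ) (hN : 3 ≤ N)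
    (B : ℝ) (hB : 0 < B) (c : ℝ) (hc : 0 < c)
    (R : ℝ → ℝ → ℝ)
    (hmeas : Measurable (fun p : ℝ × ℝ => R p.1 p.2))
    (hbound : ∀ ξ ∈ Ioo (0:ℝ) 1, ∀ t : ℝ, 0 < t → |R ξ t| ≤ B)
    (hint : ∀ t : ℝ, 0 < t →
      IntegrableOn (fun ξ : ℝ => ξ ^ ((2 : ℝ) / N - 1) * (2 - ξ) * |R ξ t|) (Ioo 0 1) volume)
    (Ψ : ℝ → ℝ)
    (hΨ : ∀ t : ℝ, Ψ t = ∫ ξ in Ioo (0:ℝ) 1, ξ ^ ((2 : ℝ) / N - 1) * (2 - ξ) * |R ξ t|)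
    (hanti : AntitoneOn Ψ (Ioi 0))
    (hdecay : ∀ t₀ t : ℝ, 0 < t₀ → t₀ ≤ t →
      Ψ t ≤ Ψ t₀ - c * ∫ τ in t₀..t, ∫ ξ in Ioo (0:ℝ) 1, |R ξ τ|) :
    Filter.Tendsto Ψ Filter.atTop (nhds 0) := by
  set a : ℝ := (2 : ℝ) / N - 1 with ha
  have hN0 : (0:ℝ) < N := by positivity
  have hN3 : (3:ℝ) ≤ N := by exact_mod_cast hN
  have hq : (0:ℝ) < a + 1 := by
    have : (0:ℝ) < 2 / N := by positivity
    simp only [ha]; linarith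
  have han1 : (-1:ℝ) < a := by linarith
  have haneg : a < 0 := by
    have : (2:ℝ) / N ≤ 2 / 3 := by
      apply div_le_div_of_nonneg_left (by norm_num) (by norm_num) hN3
    simp only [ha]; linarith
  -- measurability of ξ ↦ |R ξ t|
  have hRm : ∀ t : ℝ, Measurable fun ξ => |R ξ t| := fun t =>
    (hmeas.comp (measurable_id.prodMk measurable_const)).abs
  -- integrability of |R · t| on (0,1)
  have hRint : ∀ t : ℝ, 0 < t → IntegrableOn (fun ξ => |R ξ t|) (Ioo 0 1) volume := by
    intro t ht
    refine Integrable.mono' (g := fun _ => B)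
      (integrableOn_const measure_Ioo_lt_top.ne) ((hRm t).aestronglyMeasurable) ?_
    refine (ae_restrict_iff' measurableSet_Ioo).2 (Filter.Eventually.of_forall ?_)
    intro ξ hξ
    rw [Real.norm_eq_abs, abs_abs]
    exact hbound ξ hξ t ht
  -- nonnegativity of Ψ
  have hΨnn : ∀ t : ℝ, 0 < t → 0 ≤ Ψ t := by
    intro t ht
    rw [hΨ t]
    refine setIntegral_nonneg measurableSet_Ioo fun ξ hξ => ?_
    have h1 : (0:ℝ) ≤ ξ ^ a := Real.rpow_nonneg hξ.1.le a
    have h2 : (0:ℝ) ≤ 2 - ξ := by linarith [hξ.2]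
    positivity
  -- the key splitting estimate
  have key : ∀ η : ℝ, 0 < η → η < 1 → ∀ t : ℝ, 0 < t →
      Ψ t ≤ 2 * B * (η ^ (a + 1) / (a + 1)) +
        2 * η ^ a * ∫ ξ in Ioo (0:ℝ) 1, |R ξ t| := by
    intro η hη0 hη1 t ht
    have hsub1 : Ioo (0:ℝ) η ⊆ Ioo 0 1 := Ioo_subset_Ioo le_rfl hη1.le
    have hsub2 : Ico η (1:ℝ) ⊆ Ioo 0 1 := fun x hx => ⟨lt_of_lt_of_le hη0 hx.1, hx.2⟩
    have hf1 : IntegrableOn (fun ξ : ℝ => ξ ^ a * (2 - ξ) * |R ξ t|) (Ioo 0 η) volume :=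
      (hint t ht).mono_set hsub1
    have hf2 : IntegrableOn (fun ξ : ℝ => ξ ^ a * (2 - ξ) * |R ξ t|) (Ico η 1) volume :=
      (hint t ht).mono_set hsub2
    have hsplit : Ψ t = (∫ ξ in Ioo (0:ℝ) η, ξ ^ a * (2 - ξ) * |R ξ t|) +
        ∫ ξ in Ico η (1:ℝ), ξ ^ a * (2 - ξ) * |R ξ t| := by
      rw [hΨ t, ← Ioo_union_Ico_eq_Ioo hη0 hη1.le]
      exact setIntegral_union
        (Set.disjoint_left.2 fun x hx hx' => absurd hx.2 (not_lt.2 hx'.1))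
        measurableSet_Ico hf1 hf2
    -- bound on (0, η)
    have hrint : IntegrableOn (fun ξ : ℝ => 2 * B * ξ ^ a) (Ioo 0 η) volume := by
      have h := (intervalIntegral.intervalIntegrable_rpow' (a := 0) (b := η) han1)
      rw [intervalIntegrable_iff_integrableOn_Ioc_of_le hη0.le] at h
      exact ((h.mono_set Ioo_subset_Ioc_self).const_mul (2 * B))
    have hbd1 : (∫ ξ in Ioo (0:ℝ) η, ξ ^ a * (2 - ξ) * |R ξ t|) ≤
        ∫ ξ in Ioo (0:ℝ) η, 2 * B * ξ ^ a := by
      refine setIntegral_mono_on hf1 hrint measurableSet_Ioo fun ξ hξ => ?_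
      have hx : (0:ℝ) ≤ ξ ^ a := Real.rpow_nonneg hξ.1.le a
      have h2 : 2 - ξ ≤ 2 := by linarith [hξ.1]
      have h2' : (0:ℝ) ≤ 2 - ξ := by linarith [hξ.2.trans hη1]
      have h3 : |R ξ t| ≤ B := hbound ξ (hsub1 hξ) t ht
      have h4 : (0:ℝ) ≤ |R ξ t| := abs_nonneg _
      calc ξ ^ a * (2 - ξ) * |R ξ t| ≤ ξ ^ a * 2 * B :=
            mul_le_mul (mul_le_mul_of_nonneg_left h2 hx) h3 h4 (by positivity)
        _ = 2 * B * ξ ^ a := by ring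
    have hval : (∫ ξ in Ioo (0:ℝ) η, 2 * B * ξ ^ a) = 2 * B * (η ^ (a + 1) / (a + 1)) := by
      rw [integral_const_mul, ← integral_Ioc_eq_integral_Ioo,
        ← intervalIntegral.integral_of_le hη0.le, integral_rpow (Or.inl han1),
        Real.zero_rpow (by linarith : a + 1 ≠ 0)]
      ring
    -- bound on [η, 1)
    have hg2 : IntegrableOn (fun ξ : ℝ => 2 * η ^ a * |R ξ t|) (Ico η 1) volume :=
      (((hRint t ht).mono_set hsub2).const_mul _)
    have hbd2 : (∫ ξ in Ico η (1:ℝ), ξ ^ a * (2 - ξ) * |R ξ t|) ≤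
        2 * η ^ a * ∫ ξ in Ioo (0:ℝ) 1, |R ξ t| := by
      have step1 : (∫ ξ in Ico η (1:ℝ), ξ ^ a * (2 - ξ) * |R ξ t|) ≤
          ∫ ξ in Ico η (1:ℝ), 2 * η ^ a * |R ξ t| := by
        refine setIntegral_mono_on hf2 hg2 measurableSet_Ico fun ξ hξ => ?_
        have hx : ξ ^ a ≤ η ^ a := Real.rpow_le_rpow_of_nonpos hη0 hξ.1 haneg.le
        have hx0 : (0:ℝ) ≤ ξ ^ a := Real.rpow_nonneg (hη0.le.trans hξ.1) a
        have h2 : 2 - ξ ≤ 2 := by linarith [hη0.trans_le hξ.1]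
        have h2' : (0:ℝ) ≤ 2 - ξ := by linarith [hξ.2]
        have h4 : (0:ℝ) ≤ |R ξ t| := abs_nonneg _
        have hηa0 : (0:ℝ) ≤ η ^ a := Real.rpow_nonneg hη0.le a
        calc ξ ^ a * (2 - ξ) * |R ξ t| ≤ η ^ a * 2 * |R ξ t| :=
              mul_le_mul_of_nonneg_right (mul_le_mul hx h2 h2' hηa0) h4
          _ = 2 * η ^ a * |R ξ t| := by ring
      have step2 : (∫ ξ in Ico η (1:ℝ), |R ξ t|) ≤ ∫ ξ in Ioo (0:ℝ) 1, |R ξ t| := by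
        refine setIntegral_mono_set (hRint t ht)
          (Filter.Eventually.of_forall fun ξ => abs_nonneg _) hsub2.eventuallyLE
      rw [integral_const_mul] at step1
      have hηa : (0:ℝ) ≤ 2 * η ^ a := by positivity
      calc (∫ ξ in Ico η (1:ℝ), ξ ^ a * (2 - ξ) * |R ξ t|)
          ≤ 2 * η ^ a * ∫ ξ in Ico η (1:ℝ), |R ξ t| := step1
        _ ≤ 2 * η ^ a * ∫ ξ in Ioo (0:ℝ) 1, |R ξ t| := by
            exact mul_le_mul_of_nonneg_left step2 hηa
    calc Ψ t = _ := hsplit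
      _ ≤ 2 * B * (η ^ (a + 1) / (a + 1)) + 2 * η ^ a * ∫ ξ in Ioo (0:ℝ) 1, |R ξ t| := by
          rw [← hval]; exact add_le_add hbd1 hbd2
  -- construct the limit
  set Ψ' : ℝ → ℝ := fun t => Ψ (max t 1) with hΨ'
  have hmem : ∀ t : ℝ, max t 1 ∈ Ioi (0:ℝ) := fun t =>
    lt_of_lt_of_le one_pos (le_max_right t 1)
  have hΨ'anti : Antitone Ψ' := by
    intro s t hst
    exact hanti (hmem s) (hmem t) (max_le_max hst le_rfl)
  have hbdd : BddBelow (Set.range Ψ') := by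
    refine ⟨0, fun y hy => ?_⟩
    obtain ⟨t, rfl⟩ := hy
    exact hΨnn _ (hmem t)
  set L : ℝ := ⨅ t, Ψ' t with hL
  have htend : Filter.Tendsto Ψ' Filter.atTop (nhds L) := tendsto_atTop_ciInf hΨ'anti hbdd
  have heq : Ψ' =ᶠ[Filter.atTop] Ψ := by
    filter_upwards [Filter.eventually_ge_atTop 1] with t ht
    simp [hΨ', max_eq_left ht]
  have htendΨ : Filter.Tendsto Ψ Filter.atTop (nhds L) := htend.congr' heq
  have hL0 : 0 ≤ L := le_ciInf fun t => hΨnn _ (hmem t)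
  -- it suffices to show L = 0
  rcases eq_or_lt_of_le hL0 with hL0' | hLpos
  · rwa [← hL0'] at htendΨ
  exfalso
  have hΨge : ∀ t : ℝ, 1 ≤ t → L ≤ Ψ t := by
    intro t ht
    have h := ciInf_le hbdd t
    simp only [hΨ'] at h
    rwa [sup_eq_left.mpr ht] at h
  -- choose η
  set q : ℝ := a + 1 with hqdef
  set η : ℝ := min (1/2) ((L * q / (4 * B)) ^ q⁻¹) with hηdef
  have hx0 : (0:ℝ) < L * q / (4 * B) := by positivity
  have hη0 : 0 < η := lt_min (by norm_num) (Real.rpow_pos_of_pos hx0 _)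
  have hη1 : η < 1 := lt_of_le_of_lt (min_le_left _ _) (by norm_num)
  have hηq : η ^ q ≤ L * q / (4 * B) := by
    calc η ^ q ≤ ((L * q / (4 * B)) ^ q⁻¹) ^ q :=
          Real.rpow_le_rpow hη0.le (min_le_right _ _) hq.le
      _ = L * q / (4 * B) := Real.rpow_inv_rpow hx0.le hq.ne'
  have hmain : 2 * B * (η ^ q / q) ≤ L / 2 := by
    have h1 : 2 * B * (η ^ q / q) ≤ 2 * B * ((L * q / (4 * B)) / q) := by
      gcongr
    have h2 : 2 * B * ((L * q / (4 * B)) / q) = L / 2 := by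
      field_simp
      ring
    linarith
  set δ : ℝ := L / (4 * η ^ a) with hδ
  have hηa : (0:ℝ) < η ^ a := Real.rpow_pos_of_pos hη0 a
  have hδ0 : 0 < δ := by positivity
  -- lower bound on the unweighted integral
  have hIlow : ∀ t : ℝ, 1 ≤ t → δ ≤ ∫ ξ in Ioo (0:ℝ) 1, |R ξ t| := by
    intro t ht
    have h1 := key η hη0 hη1 t (lt_of_lt_of_le one_pos ht)
    have h2 := hΨge t ht
    have h3 : L ≤ L / 2 + 2 * η ^ a * ∫ ξ in Ioo (0:ℝ) 1, |R ξ t| := by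
      calc L ≤ Ψ t := h2
        _ ≤ 2 * B * (η ^ (a + 1) / (a + 1)) + 2 * η ^ a * ∫ ξ in Ioo (0:ℝ) 1, |R ξ t| := h1
        _ ≤ L / 2 + 2 * η ^ a * ∫ ξ in Ioo (0:ℝ) 1, |R ξ t| := by
            have : 2 * B * (η ^ (a+1) / (a+1)) ≤ L / 2 := hmain
            linarith
    rw [hδ, div_le_iff₀ (by positivity : (0:ℝ) < 4 * η ^ a)]
    nlinarith
  -- F is intervalIntegrable and bounded below by δ
  set F : ℝ → ℝ := fun τ => ∫ ξ in Ioo (0:ℝ) 1, |R ξ τ| with hF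
  have hFmeas : StronglyMeasurable F := by
    have : Measurable fun p : ℝ × ℝ => |R p.2 p.1| := (hmeas.comp measurable_swap).abs
    exact this.stronglyMeasurable.integral_prod_right'
  have hFle : ∀ τ : ℝ, 0 < τ → F τ ≤ B := by
    intro τ hτ
    have : F τ ≤ ∫ _ξ in Ioo (0:ℝ) 1, B := by
      refine setIntegral_mono_on (hRint τ hτ)
        (integrableOn_const measure_Ioo_lt_top.ne) measurableSet_Ioo
        fun ξ hξ => hbound ξ hξ τ hτ
    simpa [Real.volume_Ioo] using this
  have hFnn : ∀ τ : ℝ, 0 ≤ F τ :=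
    fun τ => setIntegral_nonneg measurableSet_Ioo fun ξ _ => abs_nonneg _
  -- derive the contradiction
  set T : ℝ := 1 + (Ψ 1 + 1) / (c * δ) with hT
  have hT1 : 1 ≤ T := by
    rw [hT]
    have h1 : 0 ≤ Ψ 1 := hΨnn 1 one_pos
    have h2 : 0 ≤ (Ψ 1 + 1) / (c * δ) := by positivity
    linarith
  have hFint : IntervalIntegrable F volume 1 T := by
    rw [intervalIntegrable_iff_integrableOn_Ioc_of_le hT1]
    refine Integrable.mono' (g := fun _ => B)
      (integrableOn_const measure_Ioc_lt_top.ne)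
      hFmeas.aestronglyMeasurable.restrict ?_
    refine (ae_restrict_iff' measurableSet_Ioc).2 (Filter.Eventually.of_forall ?_)
    intro τ hτ
    rw [Real.norm_eq_abs, abs_of_nonneg (hFnn τ)]
    exact hFle τ (lt_trans one_pos hτ.1)
  have hlow : δ * (T - 1) ≤ ∫ τ in (1:ℝ)..T, F τ := by
    have h := intervalIntegral.integral_mono_on hT1 (intervalIntegrable_const (c := δ))
      hFint (fun τ hτ => hIlow τ hτ.1)
    rw [intervalIntegral.integral_const, smul_eq_mul] at h
    nlinarith [h]
  have hfinal := hdecay 1 T one_pos hT1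
  have hTnn : 0 ≤ Ψ T := hΨnn T (lt_of_lt_of_le one_pos hT1)
  have hcδ : 0 < c * δ := by positivity
  have hTval : c * (δ * (T - 1)) = Ψ 1 + 1 := by
    rw [hT]
    field_simp
    ring
  have : Ψ T ≤ Ψ 1 - (Ψ 1 + 1) := by
    rw [← hTval]
    have : c * (δ * (T - 1)) ≤ c * ∫ τ in (1:ℝ)..T, F τ :=
      mul_le_mul_of_nonneg_left hlow hc.le
    calc Ψ T ≤ Ψ 1 - c * ∫ τ in (1:ℝ)..T, F τ := hfinal
      _ ≤ Ψ 1 - c * (δ * (T - 1)) := by linarith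
  linarith
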